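/- Let ℓ be a prime, n ≥ 1, and q ∈ (Z/ℓ^n)^× with q ≡ 1 mod ℓ but q ≢ 1 mod ℓ^n; let ν be the ℓ-adic valuation of q − 1 (so 1 ≤ ν < n). Then the number of matrices in GL₂(Z/ℓ^n) of determinant q that are conjugate to some matrix of the form [[1, w],[0, q]] equals ℓ^{2n} + ℓ^{2n−2ν−1}. -/

import Mathlib

set_option linter.unusedSectionVars false
set_option linter.unusedVariables false
open Finset Matrix
namespace Stmt10Aux
variable {ℓ n : ℕ}




lemma neZero_pow (hℓ : ℓ.Prime) : NeZero (ℓ ^ n) := ⟨pow_ne_zero n hℓ.ne_zero⟩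

lemma isUnit_iff (hℓ : ℓ.Prime) (hn : 1 ≤ n) (x : ZMod (ℓ ^ n)) :
    IsUnit x ↔ ¬ (ℓ ∣ x.val) := by
  haveI := neZero_pow (n := n) hℓ
  have hx : ((x.val : ℕ) : ZMod (ℓ ^ n)) = x := ZMod.natCast_rightInverse x
  constructor
  · intro h hdvd
    rw [← hx, ZMod.isUnit_iff_coprime] at h
    have h2 : ℓ ∣ Nat.gcd x.val (ℓ ^ n) := Nat.dvd_gcd hdvd (dvd_pow_self ℓ (by omega))
    rw [Nat.Coprime] at h
    rw [h] at h2
    have := Nat.le_of_dvd one_pos h2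
    exact absurd this (by have := hℓ.one_lt; omega)
  · intro h
    rw [← hx, ZMod.isUnit_iff_coprime]
    exact Nat.Coprime.pow_right n ((Nat.Prime.coprime_iff_not_dvd hℓ).mpr h).symm

lemma eq_pow_mul_of_val_eq (hℓ : ℓ.Prime) {j t : ℕ} {x : ZMod (ℓ ^ n)}
    (ht : x.val = ℓ ^ j * t) : x = (ℓ : ZMod (ℓ ^ n)) ^ j * (t : ZMod (ℓ ^ n)) := by
  haveI := neZero_pow (n := n) hℓ
  have hx2 : ((x.val : ℕ) : ZMod (ℓ ^ n)) = x := ZMod.natCast_rightInverse x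
  rw [← hx2, ht]; push_cast; ring

lemma cast_inj_small (hℓ : ℓ.Prime) {k : ℕ} (hk : k ≤ n) {t t' : ℕ} (ht : t < ℓ ^ k)
    (ht' : t' < ℓ ^ k)
    (h : (ℓ : ZMod (ℓ ^ n)) ^ (n - k) * t = (ℓ : ZMod (ℓ ^ n)) ^ (n - k) * t') : t = t' := by
  haveI := neZero_pow (n := n) hℓ
  have h2 : ((ℓ ^ (n - k) * t : ℕ) : ZMod (ℓ ^ n)) = ((ℓ ^ (n - k) * t' : ℕ) : ZMod (ℓ ^ n)) := by
    push_cast; exact h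
  rw [ZMod.natCast_eq_natCast_iff] at h2
  have hn : ℓ ^ n = ℓ ^ (n - k) * ℓ ^ k := by rw [← pow_add]; congr 1; omega
  rw [hn] at h2
  have h3 : t ≡ t' [MOD ℓ ^ k] :=
    Nat.ModEq.mul_left_cancel' (pow_ne_zero _ hℓ.ne_zero) h2
  unfold Nat.ModEq at h3
  rwa [Nat.mod_eq_of_lt ht, Nat.mod_eq_of_lt ht'] at h3

lemma exists_reduce (hℓ : ℓ.Prime) {m : ℕ} (hm : m ≤ n) (y : ZMod (ℓ ^ n)) :
    ∃ t : ℕ, t < ℓ ^ (n - m) ∧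
      (ℓ : ZMod (ℓ ^ n)) ^ m * y = (ℓ : ZMod (ℓ ^ n)) ^ m * (t : ZMod (ℓ ^ n)) := by
  haveI := neZero_pow (n := n) hℓ
  refine ⟨y.val % ℓ ^ (n - m), Nat.mod_lt _ (pow_pos hℓ.pos _), ?_⟩
  have hx2 : ((y.val : ℕ) : ZMod (ℓ ^ n)) = y := ZMod.natCast_rightInverse y
  have hsplit : y.val = ℓ ^ (n - m) * (y.val / ℓ ^ (n - m)) + y.val % ℓ ^ (n - m) := by
    have := Nat.div_add_mod y.val (ℓ ^ (n - m)); omega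
  conv_lhs => rw [← hx2, hsplit]
  have hmul : (ℓ : ZMod (ℓ ^ n)) ^ m * (ℓ : ZMod (ℓ ^ n)) ^ (n - m) = 0 := by
    rw [← pow_add]
    have : m + (n - m) = n := by omega
    rw [this, ← Nat.cast_pow, ZMod.natCast_self]
  push_cast
  linear_combination ((y.val / ℓ ^ (n - m) : ℕ) : ZMod (ℓ ^ n)) * hmul


lemma card_filter_dvd (hℓ : ℓ.Prime) [NeZero (ℓ ^ n)] {j : ℕ} (hj : j ≤ n) :
    (univ.filter fun b : ZMod (ℓ ^ n) => ℓ ^ j ∣ b.val).card = ℓ ^ (n - j) := by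
  classical
  have hpow : ℓ ^ n = ℓ ^ j * ℓ ^ (n - j) := by rw [← pow_add]; congr 1; omega
  have hlt : ∀ t : ℕ, t < ℓ ^ (n - j) → ℓ ^ j * t < ℓ ^ n := by
    intro t ht
    rw [hpow]
    exact (mul_lt_mul_iff_right₀ (pow_pos hℓ.pos j)).mpr ht
  rw [← Finset.card_range (ℓ ^ (n - j))]
  apply Finset.card_bij' (fun b _ => b.val / ℓ ^ j) (fun t _ => ((ℓ ^ j * t : ℕ) : ZMod (ℓ ^ n)))
  · intro b hb
    rw [mem_filter] at hb
    rw [mem_range]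
    have hbv : b.val < ℓ ^ n := ZMod.val_lt b
    exact Nat.div_lt_of_lt_mul (by omega)
  · intro t ht
    rw [mem_range] at ht
    rw [mem_filter]
    rw [ZMod.val_cast_of_lt (hlt t ht)]
    exact ⟨mem_univ _, Dvd.intro t rfl⟩
  · intro b hb
    rw [mem_filter] at hb
    obtain ⟨-, hdvd⟩ := hb
    rw [Nat.mul_div_cancel' hdvd]
    exact ZMod.natCast_rightInverse b
  · intro t ht
    rw [mem_range] at ht
    rw [ZMod.val_cast_of_lt (hlt t ht)]
    exact Nat.mul_div_cancel_left t (pow_pos hℓ.pos _)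


lemma eq_pow_mul_of_val_eq' (hℓ : ℓ.Prime) [NeZero (ℓ ^ n)] {j t : ℕ} {x : ZMod (ℓ ^ n)}
    (ht : x.val = ℓ ^ j * t) : x = (ℓ : ZMod (ℓ ^ n)) ^ j * (t : ZMod (ℓ ^ n)) := by
  have hx2 : ((x.val : ℕ) : ZMod (ℓ ^ n)) = x := ZMod.natCast_rightInverse x
  rw [← hx2, ht]; push_cast; ring

/-- the capped valuation -/
def mfun (ℓ ν : ℕ) {n : ℕ} (b : ZMod (ℓ ^ n)) : ℕ :=
  if b = 0 then ν else min ν (padicValNat ℓ b.val)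

lemma mfun_le {ν : ℕ} (b : ZMod (ℓ ^ n)) : mfun ℓ ν b ≤ ν := by
  unfold mfun; split <;> simp

lemma mfun_dvd (hℓ : ℓ.Prime) [NeZero (ℓ ^ n)] {ν : ℕ} (b : ZMod (ℓ ^ n)) :
    ℓ ^ (mfun ℓ ν b) ∣ b.val := by
  unfold mfun
  split
  · next h => rw [h, ZMod.val_zero]; exact dvd_zero _
  · exact dvd_trans (pow_dvd_pow ℓ (min_le_right _ _)) pow_padicValNat_dvd

lemma mfun_eq_iff_lt (hℓ : ℓ.Prime) [NeZero (ℓ ^ n)] {ν j : ℕ} (hj : j < ν)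
    (b : ZMod (ℓ ^ n)) :
    mfun ℓ ν b = j ↔ ℓ ^ j ∣ b.val ∧ ¬ ℓ ^ (j + 1) ∣ b.val := by
  haveI : Fact ℓ.Prime := ⟨hℓ⟩
  by_cases hb : b = 0
  · unfold mfun
    rw [if_pos hb, hb, ZMod.val_zero]
    exact iff_of_false (by omega) (fun ⟨_, h2⟩ => h2 (dvd_zero _))
  · have hval : b.val ≠ 0 := fun h => hb ((ZMod.val_eq_zero b).mp h)
    simp only [mfun, if_neg hb]
    constructor
    · intro h
      have hv : padicValNat ℓ b.val = j := by omega
      rw [← hv]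
      exact ⟨pow_padicValNat_dvd, pow_succ_padicValNat_not_dvd hval⟩
    · intro ⟨h1, h2⟩
      have hle : j ≤ padicValNat ℓ b.val := (padicValNat_dvd_iff_le hval).mp h1
      have hlt : ¬ (j + 1 ≤ padicValNat ℓ b.val) := fun hc =>
        h2 ((padicValNat_dvd_iff_le hval).mpr hc)
      omega

lemma mfun_eq_nu_iff (hℓ : ℓ.Prime) [NeZero (ℓ ^ n)] {ν : ℕ} (b : ZMod (ℓ ^ n)) :
    mfun ℓ ν b = ν ↔ ℓ ^ ν ∣ b.val := by
  haveI : Fact ℓ.Prime := ⟨hℓ⟩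
  by_cases hb : b = 0
  · subst hb
    rw [ZMod.val_zero]
    simp [mfun]
  · have hval : b.val ≠ 0 := fun h => hb ((ZMod.val_eq_zero b).mp h)
    simp only [mfun, if_neg hb]
    rw [padicValNat_dvd_iff_le hval]
    omega

lemma decomp (hℓ : ℓ.Prime) [NeZero (ℓ ^ n)] {ν : ℕ} {c u : ZMod (ℓ ^ n)}
    (hu : IsUnit u) (hc : c = (ℓ : ZMod (ℓ ^ n)) ^ ν * u) (b : ZMod (ℓ ^ n)) :
    ∃ y₀ r s : ZMod (ℓ ^ n), b = (ℓ : ZMod (ℓ ^ n)) ^ (mfun ℓ ν b) * y₀ ∧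
      (ℓ : ZMod (ℓ ^ n)) ^ (mfun ℓ ν b) = r * b + s * c := by
  haveI : Fact ℓ.Prime := ⟨hℓ⟩
  obtain ⟨t, ht⟩ := mfun_dvd hℓ (ν := ν) b
  have hb : b = (ℓ : ZMod (ℓ ^ n)) ^ (mfun ℓ ν b) * (t : ZMod (ℓ ^ n)) :=
    eq_pow_mul_of_val_eq' hℓ ht
  rcases eq_or_lt_of_le (mfun_le (ν := ν) b) with hcase | hcase
  · -- m = ν
    obtain ⟨u', hu'⟩ := hu.exists_right_inv
    refine ⟨t, 0, u', hb, ?_⟩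
    rw [hc, zero_mul, zero_add, hcase]
    linear_combination (-((ℓ : ZMod (ℓ ^ n)) ^ ν)) * hu'
  · -- m < ν : t is a unit
    have hbne : b ≠ 0 := by
      intro h
      rw [h] at hcase
      simp [mfun] at hcase
    have hval : b.val ≠ 0 := fun h => hbne ((ZMod.val_eq_zero b).mp h)
    have hmv : mfun ℓ ν b = padicValNat ℓ b.val := by
      have := hcase
      simp only [mfun, if_neg hbne] at this ⊢
      omega
    have hnd : ¬ ℓ ∣ t := by
      intro ⟨t', ht'⟩
      have : ℓ ^ (padicValNat ℓ b.val + 1) ∣ b.val := by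
        rw [← hmv, ht, ht', pow_succ]
        exact ⟨t', by ring⟩
      exact pow_succ_padicValNat_not_dvd hval this
    have hut : IsUnit (t : ZMod (ℓ ^ n)) := by
      rw [ZMod.isUnit_iff_coprime]
      exact Nat.Coprime.pow_right n ((Nat.Prime.coprime_iff_not_dvd hℓ).mpr hnd).symm
    obtain ⟨t', ht'⟩ := hut.exists_right_inv
    refine ⟨t, t', 0, hb, ?_⟩
    rw [zero_mul, add_zero]
    linear_combination (-t') * hb - ((ℓ : ZMod (ℓ ^ n)) ^ (mfun ℓ ν b)) * ht'


noncomputable def pi (ℓ n : ℕ) (hn : n ≠ 0) : ZMod (ℓ ^ n) →+* ZMod ℓ :=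
  ZMod.castHom (dvd_pow_self ℓ hn) (ZMod ℓ)

lemma pi_eq_zero_iff (hℓ : ℓ.Prime) (hn : n ≠ 0) [NeZero (ℓ ^ n)] (x : ZMod (ℓ ^ n)) :
    pi ℓ n hn x = 0 ↔ ℓ ∣ x.val := by
  haveI : NeZero ℓ := ⟨hℓ.ne_zero⟩
  have h : pi ℓ n hn x = ((x.val : ℕ) : ZMod ℓ) := by
    rw [ZMod.natCast_val]; rfl
  rw [h, ZMod.natCast_eq_zero_iff]

lemma isUnit_iff' (hℓ : ℓ.Prime) (hn : 1 ≤ n) (x : ZMod (ℓ ^ n)) :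
    IsUnit x ↔ ¬ (ℓ ∣ x.val) := by
  haveI : NeZero (ℓ ^ n) := ⟨pow_ne_zero n hℓ.ne_zero⟩
  have hx : ((x.val : ℕ) : ZMod (ℓ ^ n)) = x := ZMod.natCast_rightInverse x
  constructor
  · intro h hdvd
    rw [← hx, ZMod.isUnit_iff_coprime] at h
    have h2 : ℓ ∣ Nat.gcd x.val (ℓ ^ n) := Nat.dvd_gcd hdvd (dvd_pow_self ℓ (by omega))
    rw [Nat.Coprime] at h
    rw [h] at h2
    have := Nat.le_of_dvd one_pos h2
    exact absurd this (by have := hℓ.one_lt; omega)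
  · intro h
    rw [← hx, ZMod.isUnit_iff_coprime]
    exact Nat.Coprime.pow_right n ((Nat.Prime.coprime_iff_not_dvd hℓ).mpr h).symm

lemma isUnit_iff_pi (hℓ : ℓ.Prime) (hn : 1 ≤ n) [NeZero (ℓ ^ n)] (x : ZMod (ℓ ^ n)) :
    IsUnit x ↔ pi ℓ n (Nat.one_le_iff_ne_zero.mp hn) x ≠ 0 := by
  rw [isUnit_iff' hℓ hn, ← pi_eq_zero_iff hℓ (by omega : n ≠ 0)]

lemma local_col (hℓ : ℓ.Prime) (hn : 1 ≤ n) [NeZero (ℓ ^ n)]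
    (A : Matrix (Fin 2) (Fin 2) (ZMod (ℓ ^ n))) (h : IsUnit A.det) :
    IsUnit (A 0 0) ∨ IsUnit (A 1 0) := by
  haveI : Nontrivial (ZMod ℓ) := @ZMod.nontrivial ℓ ⟨hℓ.one_lt⟩
  by_contra hcon
  push_neg at hcon
  obtain ⟨h0, h1⟩ := hcon
  rw [isUnit_iff_pi hℓ hn, not_not] at h0 h1
  have hdet : pi ℓ n (by omega) A.det = 0 := by
    rw [Matrix.det_fin_two, map_sub, _root_.map_mul, _root_.map_mul, h0, h1, zero_mul,
      mul_zero, sub_zero]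
  have := h.map (pi ℓ n (by omega : n ≠ 0))
  rw [hdet] at this
  exact zero_ne_one (isUnit_zero_iff.mp this)


section Mats
variable {R : Type} [CommRing R]

lemma entry_iff (a b c d a' b' c' d' : R) :
    !![a,b;c,d] = !![a',b';c',d'] ↔ (a = a' ∧ b = b' ∧ c = c' ∧ d = d') := by
  constructor
  · intro h
    exact ⟨congrFun (congrFun h 0) 0, congrFun (congrFun h 0) 1,
      congrFun (congrFun h 1) 0, congrFun (congrFun h 1) 1⟩
  · rintro ⟨rfl, rfl, rfl, rfl⟩; rfl

lemma fix_iff (M : Matrix (Fin 2) (Fin 2) R) (x y : R) :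
    M.mulVec ![x, y] = ![x, y] ↔ (M 0 0 * x + M 0 1 * y = x ∧ M 1 0 * x + M 1 1 * y = y) := by
  have hv : M.mulVec ![x, y] = ![M 0 0 * x + M 0 1 * y, M 1 0 * x + M 1 1 * y] := by
    funext i
    fin_cases i <;>
      simp [Matrix.mulVec, Fin.sum_univ_two, Matrix.vecHead, Matrix.vecTail, Function.comp]
  rw [hv]
  constructor
  · intro h
    exact ⟨congrFun h 0, congrFun h 1⟩
  · intro ⟨h1, h2⟩
    funext i; fin_cases i <;> simp [h1, h2]

lemma build (q : R) {M : Matrix (Fin 2) (Fin 2) R} (hdet : M.det = q)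
    (B : Matrix (Fin 2) (Fin 2) R) (hB : IsUnit B.det)
    (hcol : M.mulVec ![B 0 0, B 1 0] = ![B 0 0, B 1 0]) :
    ∃ (w : R) (g : GL (Fin 2) R),
      (g : Matrix (Fin 2) (Fin 2) R) * (!![1, w; 0, q]) *
        ((g⁻¹ : GL (Fin 2) R) : Matrix (Fin 2) (Fin 2) R) = M := by
  obtain ⟨g, hg⟩ := (Matrix.isUnit_iff_isUnit_det B).mpr hB
  subst hg
  set C : Matrix (Fin 2) (Fin 2) R :=
    ((g⁻¹ : GL (Fin 2) R) : Matrix (Fin 2) (Fin 2) R) * M * (g : Matrix (Fin 2) (Fin 2) R)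
    with hC
  have hcolMB : ∀ k, (M * (g : Matrix (Fin 2) (Fin 2) R)) k 0
      = (g : Matrix (Fin 2) (Fin 2) R) k 0 := by
    intro k
    have h1 : (M * (g : Matrix (Fin 2) (Fin 2) R)) k 0
        = M.mulVec ![(g : Matrix (Fin 2) (Fin 2) R) 0 0, (g : Matrix (Fin 2) (Fin 2) R) 1 0] k := by
      rw [Matrix.mul_apply, Fin.sum_univ_two]
      simp [Matrix.mulVec, Fin.sum_univ_two, Matrix.vecHead, Matrix.vecTail, Function.comp]
    rw [h1, hcol]
    fin_cases k <;> simp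
  have hCcol : ∀ i, C i 0 = (1 : Matrix (Fin 2) (Fin 2) R) i 0 := by
    intro i
    calc C i 0 = ∑ k, ((g⁻¹ : GL (Fin 2) R) : Matrix (Fin 2) (Fin 2) R) i k
        * (M * (g : Matrix (Fin 2) (Fin 2) R)) k 0 := by
          rw [hC, Matrix.mul_assoc, Matrix.mul_apply]
      _ = ∑ k, ((g⁻¹ : GL (Fin 2) R) : Matrix (Fin 2) (Fin 2) R) i k
        * (g : Matrix (Fin 2) (Fin 2) R) k 0 :=
          Finset.sum_congr rfl (fun k _ => by rw [hcolMB])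
      _ = (((g⁻¹ : GL (Fin 2) R) : Matrix (Fin 2) (Fin 2) R)
          * (g : Matrix (Fin 2) (Fin 2) R)) i 0 := (Matrix.mul_apply).symm
      _ = (1 : Matrix (Fin 2) (Fin 2) R) i 0 := by rw [Units.inv_mul]
  have h00 : C 0 0 = 1 := (hCcol 0).trans (Matrix.one_apply_eq 0)
  have h10 : C 1 0 = 0 := (hCcol 1).trans (Matrix.one_apply_ne (by decide))
  have hdetC : C.det = q := by
    rw [hC, Matrix.det_mul, Matrix.det_mul, hdet, mul_comm, ← mul_assoc, ← Matrix.det_mul,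
      Units.mul_inv, Matrix.det_one, one_mul]
  have h11 : C 1 1 = q := by
    rw [Matrix.det_fin_two, h00, h10] at hdetC
    linear_combination hdetC
  have hCeq : C = !![1, C 0 1; 0, q] := by
    conv_lhs => rw [Matrix.eta_fin_two C]
    rw [h00, h10, h11]
  have hfin : (g : Matrix (Fin 2) (Fin 2) R) * C
      * ((g⁻¹ : GL (Fin 2) R) : Matrix (Fin 2) (Fin 2) R) = M := by
    rw [hC]
    simp only [← Matrix.mul_assoc]
    rw [Units.mul_inv, Matrix.one_mul, Matrix.mul_assoc, Units.mul_inv, Matrix.mul_one]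
  exact ⟨C 0 1, g, by rw [← hCeq]; exact hfin⟩

end Mats

section FD
variable {R : Type} [CommRing R]

-- assume fix_iff from f.lean; re-prove here for standalone test
lemma fix_iff' (M : Matrix (Fin 2) (Fin 2) R) (x y : R) :
    M.mulVec ![x, y] = ![x, y] ↔ (M 0 0 * x + M 0 1 * y = x ∧ M 1 0 * x + M 1 1 * y = y) := by
  have hv : M.mulVec ![x, y] = ![M 0 0 * x + M 0 1 * y, M 1 0 * x + M 1 1 * y] := by
    funext i
    fin_cases i <;>
      simp [Matrix.mulVec, Fin.sum_univ_two, Matrix.vecHead, Matrix.vecTail, Function.comp]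
  rw [hv]
  constructor
  · intro h
    exact ⟨congrFun h 0, congrFun h 1⟩
  · intro ⟨h1, h2⟩
    funext i; fin_cases i <;> simp [h1, h2]

lemma forward (q : R) (M : Matrix (Fin 2) (Fin 2) R)
    (hlocal : ∀ A : Matrix (Fin 2) (Fin 2) R, IsUnit A.det → IsUnit (A 0 0) ∨ IsUnit (A 1 0))
    (h : M.det = q ∧ ∃ (w : R) (g : GL (Fin 2) R),
      (g : Matrix (Fin 2) (Fin 2) R) * (!![1, w; 0, q]) *
        ((g⁻¹ : GL (Fin 2) R) : Matrix (Fin 2) (Fin 2) R) = M) :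
    (M.det = q ∧ ∃ y : R, M.mulVec ![1, y] = ![1, y]) ∨
    (M.det = q ∧ ∃ x : R, ¬ IsUnit x ∧ M.mulVec ![x, 1] = ![x, 1]) := by
  obtain ⟨hdet, w, g, hg⟩ := h
  have hMg : M * (g : Matrix (Fin 2) (Fin 2) R)
      = (g : Matrix (Fin 2) (Fin 2) R) * !![1, w; 0, q] := by
    rw [← hg, Matrix.mul_assoc ((g : Matrix (Fin 2) (Fin 2) R) * !![1, w; 0, q]),
      Units.inv_mul, Matrix.mul_one]
  have hent : ∀ i, M i 0 * (g : Matrix (Fin 2) (Fin 2) R) 0 0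
      + M i 1 * (g : Matrix (Fin 2) (Fin 2) R) 1 0 = (g : Matrix (Fin 2) (Fin 2) R) i 0 := by
    intro i
    have h1 := congrFun (congrFun hMg i) 0
    rw [Matrix.mul_apply, Matrix.mul_apply, Fin.sum_univ_two, Fin.sum_univ_two] at h1
    simpa using h1
  have e1 := hent 0
  have e2 := hent 1
  have hdetg : IsUnit ((g : Matrix (Fin 2) (Fin 2) R)).det :=
    (Matrix.isUnit_iff_isUnit_det _).mp g.isUnit
  have leftcase : IsUnit ((g : Matrix (Fin 2) (Fin 2) R) 0 0) →
      (M.det = q ∧ ∃ y : R, M.mulVec ![1, y] = ![1, y]) := by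
    intro h0
    obtain ⟨v, hv⟩ := h0.exists_right_inv
    refine ⟨hdet, (g : Matrix (Fin 2) (Fin 2) R) 1 0 * v, ?_⟩
    rw [fix_iff']
    constructor
    · linear_combination v * e1 - M 0 0 * hv + hv
    · linear_combination v * e2 - M 1 0 * hv
  rcases hlocal _ hdetg with h0 | h1
  · exact Or.inl (leftcase h0)
  · by_cases h0' : IsUnit ((g : Matrix (Fin 2) (Fin 2) R) 0 0)
    · exact Or.inl (leftcase h0')
    · obtain ⟨v, hv⟩ := h1.exists_right_inv
      right
      refine ⟨hdet, (g : Matrix (Fin 2) (Fin 2) R) 0 0 * v, ?_, ?_⟩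
      · intro hx
        have hxg : ((g : Matrix (Fin 2) (Fin 2) R) 0 0 * v)
            * (g : Matrix (Fin 2) (Fin 2) R) 1 0 = (g : Matrix (Fin 2) (Fin 2) R) 0 0 := by
          linear_combination ((g : Matrix (Fin 2) (Fin 2) R) 0 0) * hv
        exact h0' (hxg ▸ hx.mul h1)
      · rw [fix_iff']
        constructor
        · linear_combination v * e1 - M 0 1 * hv
        · linear_combination v * e2 + (1 - M 1 1) * hv

lemma derive_q_eq_one (q : R) (M : Matrix (Fin 2) (Fin 2) R) (hdet : M.det = q)
    {x y e : R} (he : e = 1 - x * y) (hu : IsUnit e)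
    (h1 : M.mulVec ![1, y] = ![1, y]) (h2 : M.mulVec ![x, 1] = ![x, 1]) : q = 1 := by
  rw [fix_iff'] at h1 h2
  obtain ⟨e1, e2⟩ := h1
  obtain ⟨f1, f2⟩ := h2
  obtain ⟨v, hv⟩ := hu.exists_right_inv
  have hM01 : M 0 1 * e = 0 := by linear_combination f1 - x * e1 + (M 0 1) * he
  have hM10 : M 1 0 * e = 0 := by linear_combination e2 - y * f2 + (M 1 0) * he
  have hM01' : M 0 1 = 0 := by
    have := congrArg (· * v) hM01
    simpa [mul_assoc, hv] using this
  have hM10' : M 1 0 = 0 := by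
    have := congrArg (· * v) hM10
    simpa [mul_assoc, hv] using this
  have h00 : M 0 0 = 1 := by linear_combination e1 - y * hM01'
  have h11 : M 1 1 = 1 := by linear_combination f2 - x * hM10'
  rw [Matrix.det_fin_two, h00, h11, hM01', hM10'] at hdet
  linear_combination -hdet

end FD

section Fib
variable {R : Type} [CommRing R]

lemma entry_iff2 (a b c d a' b' c' d' : R) :
    !![a,b;c,d] = !![a',b';c',d'] ↔ (a = a' ∧ b = b' ∧ c = c' ∧ d = d') := by
  constructor
  · intro h
    exact ⟨congrFun (congrFun h 0) 0, congrFun (congrFun h 0) 1,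
      congrFun (congrFun h 1) 0, congrFun (congrFun h 1) 1⟩
  · rintro ⟨rfl, rfl, rfl, rfl⟩; rfl

lemma fix_iff2 (M : Matrix (Fin 2) (Fin 2) R) (x y : R) :
    M.mulVec ![x, y] = ![x, y] ↔ (M 0 0 * x + M 0 1 * y = x ∧ M 1 0 * x + M 1 1 * y = y) := by
  have hv : M.mulVec ![x, y] = ![M 0 0 * x + M 0 1 * y, M 1 0 * x + M 1 1 * y] := by
    funext i
    fin_cases i <;>
      simp [Matrix.mulVec, Fin.sum_univ_two, Matrix.vecHead, Matrix.vecTail, Function.comp]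
  rw [hv]
  constructor
  · intro h
    exact ⟨congrFun h 0, congrFun h 1⟩
  · intro ⟨h1, h2⟩
    funext i; fin_cases i <;> simp [h1, h2]

lemma fix_lit (a b c d x y : R) :
    (!![a,b;c,d]).mulVec ![x, y] = ![x, y] ↔ (a*x + b*y = x ∧ c*x + d*y = y) := by
  rw [fix_iff2]; simp

def fone (c q b y : R) : Matrix (Fin 2) (Fin 2) R :=
  !![1 - b*y, b; -(c + b*y)*y, q + b*y]

def ftwo (l c q e x : R) : Matrix (Fin 2) (Fin 2) R :=
  !![q + e*(l*x), -(c + e*(l*x))*(l*x); e, 1 - e*(l*x)]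

lemma fib1 (c q b y y' : R) :
    fone c q b y = fone c q b y' ↔ (b*(y - y') = 0 ∧ c*(y - y') = 0) := by
  unfold fone
  rw [entry_iff2]
  constructor
  · intro ⟨h00, _, h10, _⟩
    have hbz : b*(y - y') = 0 := by linear_combination -h00
    refine ⟨hbz, ?_⟩
    linear_combination -h10 - (y + y') * hbz
  · intro ⟨hbz, hcz⟩
    refine ⟨by linear_combination -hbz, rfl, by linear_combination -hcz - (y + y') * hbz,
      by linear_combination hbz⟩

lemma fib2 (l c q e x x' : R) :
    ftwo l c q e x = ftwo l c q e x' ↔ ((l*e)*(x - x') = 0 ∧ (l*c)*(x - x') = 0) := by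
  unfold ftwo
  rw [entry_iff2]
  constructor
  · intro ⟨h00, h01, _, _⟩
    have hez : (l*e)*(x - x') = 0 := by linear_combination h00
    refine ⟨hez, ?_⟩
    linear_combination -h01 - (l*x + l*x') * hez
  · intro ⟨hez, hcz⟩
    refine ⟨by linear_combination hez, by linear_combination -hcz - (l*x + l*x') * hez, rfl,
      by linear_combination -hez⟩

lemma mem1 {c q b : R} (hc : c = q - 1) (M : Matrix (Fin 2) (Fin 2) R) :
    ((M.det = q ∧ ∃ y : R, M.mulVec ![1, y] = ![1, y]) ∧ M 0 1 = b) ↔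
      ∃ y : R, M = fone c q b y := by
  constructor
  · intro ⟨⟨hdet, y, hy⟩, hb⟩
    rw [fix_iff2] at hy
    obtain ⟨e1, e2⟩ := hy
    rw [Matrix.det_fin_two] at hdet
    refine ⟨y, ?_⟩
    rw [Matrix.eta_fin_two M]
    unfold fone
    rw [entry_iff2]
    have h11 : M 1 1 = q + b*y := by
      linear_combination hdet - M 1 1 * e1 + M 0 1 * e2 + y * hb
    refine ⟨?_, hb, ?_, h11⟩
    · linear_combination e1 - y * hb
    · linear_combination e2 - y * h11 + y * hc
  · intro ⟨y, hM⟩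
    subst hM
    unfold fone
    refine ⟨⟨?_, y, ?_⟩, by simp⟩
    · rw [Matrix.det_fin_two_of]
      linear_combination b * y * hc
    · rw [fix_lit]
      exact ⟨by ring, by linear_combination -y * hc⟩

lemma mem2 {l c q e : R} (hc : c = q - 1)
    (hnu : ∀ x : R, ¬ IsUnit x ↔ ∃ x' : R, x = l * x') (M : Matrix (Fin 2) (Fin 2) R) :
    ((M.det = q ∧ ∃ x : R, ¬ IsUnit x ∧ M.mulVec ![x, 1] = ![x, 1]) ∧ M 1 0 = e) ↔
      ∃ x : R, M = ftwo l c q e x := by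
  constructor
  · intro ⟨⟨hdet, x, hxu, hx⟩, hb⟩
    obtain ⟨x', rfl⟩ := (hnu x).mp hxu
    rw [fix_iff2] at hx
    obtain ⟨f1, f2⟩ := hx
    rw [Matrix.det_fin_two] at hdet
    refine ⟨x', ?_⟩
    rw [Matrix.eta_fin_two M]
    unfold ftwo
    rw [entry_iff2]
    have h00 : M 0 0 = q + e*(l*x') := by
      linear_combination hdet - M 0 0 * f2 + M 1 0 * f1 + (l*x') * hb
    refine ⟨h00, ?_, hb, ?_⟩
    · linear_combination f1 - (l*x') * h00 + (l*x') * hc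
    · linear_combination f2 - (l*x') * hb
  · intro ⟨x, hM⟩
    subst hM
    unfold ftwo
    refine ⟨⟨?_, l * x, ?_, ?_⟩, by simp⟩
    · rw [Matrix.det_fin_two_of]
      linear_combination (e * (l*x)) * hc
    · rw [hnu]
      exact ⟨x, rfl⟩
    · rw [fix_lit]
      exact ⟨by linear_combination -(l*x) * hc, by ring⟩

end Fib
section Count
variable {ℓ n : ℕ}

lemma nonunit_iff (hℓ : ℓ.Prime) (hn : 1 ≤ n) [NeZero (ℓ ^ n)] (x : ZMod (ℓ ^ n)) :
    ¬ IsUnit x ↔ ∃ x' : ZMod (ℓ ^ n), x = (ℓ : ZMod (ℓ ^ n)) * x' := by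
  rw [isUnit_iff' hℓ hn, not_not]
  constructor
  · intro h
    obtain ⟨t, ht⟩ := h
    have := eq_pow_mul_of_val_eq' (n := n) hℓ (j := 1) (t := t) (by rw [pow_one]; exact ht)
    rw [pow_one] at this
    exact ⟨t, this⟩
  · rintro ⟨x', rfl⟩
    haveI : NeZero ℓ := ⟨hℓ.ne_zero⟩
    have hpi : pi ℓ n (by omega) ((ℓ : ZMod (ℓ ^ n)) * x') = 0 := by
      rw [_root_.map_mul]
      have h1 : pi ℓ n (by omega : n ≠ 0) (ℓ : ZMod (ℓ ^ n)) = 0 := by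
        rw [map_natCast, ZMod.natCast_self]
      rw [h1, zero_mul]
    rwa [pi_eq_zero_iff hℓ (by omega : n ≠ 0)] at hpi

lemma ann_iff (hℓ : ℓ.Prime) [NeZero (ℓ ^ n)] {ν : ℕ} (hν : ν < n) {c u : ZMod (ℓ ^ n)}
    (hu : IsUnit u) (hcu : c = (ℓ : ZMod (ℓ ^ n)) ^ ν * u) (b : ZMod (ℓ ^ n))
    (z : ZMod (ℓ ^ n)) :
    (b * z = 0 ∧ c * z = 0) ↔ (ℓ : ZMod (ℓ ^ n)) ^ (mfun ℓ ν b) * z = 0 := by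
  obtain ⟨y₀, r, s, hb0, hlin⟩ := decomp hℓ hu hcu b
  have hmν : mfun ℓ ν b ≤ ν := mfun_le b
  have hpow : (ℓ : ZMod (ℓ ^ n)) ^ ν
      = (ℓ : ZMod (ℓ ^ n)) ^ (ν - mfun ℓ ν b) * (ℓ : ZMod (ℓ ^ n)) ^ (mfun ℓ ν b) := by
    rw [← pow_add]; congr 1; omega
  constructor
  · intro ⟨h1, h2⟩
    calc (ℓ : ZMod (ℓ ^ n)) ^ (mfun ℓ ν b) * z = (r * b + s * c) * z := by rw [← hlin]
      _ = r * (b * z) + s * (c * z) := by ring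
      _ = 0 := by rw [h1, h2, mul_zero, mul_zero, add_zero]
  · intro h
    constructor
    · linear_combination z * hb0 + y₀ * h
    · linear_combination z * hcu + z * u * hpow
        + ((ℓ : ZMod (ℓ ^ n)) ^ (ν - mfun ℓ ν b) * u) * h

lemma card_fiber1 (hℓ : ℓ.Prime) (hn : 1 ≤ n) [NeZero (ℓ ^ n)] {ν : ℕ} (hν : ν < n)
    {c u q : ZMod (ℓ ^ n)} (hu : IsUnit u) (hcu : c = (ℓ : ZMod (ℓ ^ n)) ^ ν * u)
    (hc : c = q - 1) (b : ZMod (ℓ ^ n)) :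
    (univ.filter fun M : Matrix (Fin 2) (Fin 2) (ZMod (ℓ ^ n)) =>
      (M.det = q ∧ ∃ y, M.mulVec ![1, y] = ![1, y]) ∧ M 0 1 = b).card
      = ℓ ^ (n - mfun ℓ ν b) := by
  classical
  have hmn : mfun ℓ ν b ≤ n := le_trans (mfun_le b) (le_of_lt hν)
  have hset : (univ.filter fun M : Matrix (Fin 2) (Fin 2) (ZMod (ℓ ^ n)) =>
      (M.det = q ∧ ∃ y, M.mulVec ![1, y] = ![1, y]) ∧ M 0 1 = b)
      = (Finset.range (ℓ ^ (n - mfun ℓ ν b))).image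
        (fun t : ℕ => fone c q b (t : ZMod (ℓ ^ n))) := by
    ext M
    rw [mem_filter, mem_image]
    constructor
    · intro hMf
      obtain ⟨y, hMy⟩ := (mem1 hc M).mp hMf.2
      obtain ⟨t, ht, hred⟩ := exists_reduce hℓ hmn y
      have hz : (ℓ : ZMod (ℓ ^ n)) ^ (mfun ℓ ν b) * (y - (t : ZMod (ℓ ^ n))) = 0 := by
        linear_combination hred
      have hfe : fone c q b y = fone c q b (t : ZMod (ℓ ^ n)) :=
        (fib1 c q b y _).mpr ((ann_iff hℓ hν hu hcu b _).mpr hz)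
      exact ⟨t, mem_range.mpr ht, (hMy.trans hfe).symm⟩
    · rintro ⟨t, ht, rfl⟩
      exact ⟨mem_univ _, (mem1 hc _).mpr ⟨t, rfl⟩⟩
  rw [hset, Finset.card_image_of_injOn, Finset.card_range]
  intro t ht t' ht' hf
  rw [mem_coe, mem_range] at ht ht'
  have h1 := (fib1 c q b _ _).mp hf
  have h2 := (ann_iff hℓ hν hu hcu b _).mp h1
  have h3 : (ℓ : ZMod (ℓ ^ n)) ^ (n - (n - mfun ℓ ν b)) * (t : ZMod (ℓ ^ n))
      = (ℓ : ZMod (ℓ ^ n)) ^ (n - (n - mfun ℓ ν b)) * (t' : ZMod (ℓ ^ n)) := by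
    have hee : n - (n - mfun ℓ ν b) = mfun ℓ ν b := by omega
    rw [hee]
    linear_combination h2
  exact cast_inj_small hℓ (by omega : n - mfun ℓ ν b ≤ n) ht ht' h3

lemma card_fiber2 (hℓ : ℓ.Prime) (hn : 1 ≤ n) [NeZero (ℓ ^ n)] {ν : ℕ} (hν : ν < n)
    {c u q : ZMod (ℓ ^ n)} (hu : IsUnit u) (hcu : c = (ℓ : ZMod (ℓ ^ n)) ^ ν * u)
    (hc : c = q - 1) (e : ZMod (ℓ ^ n)) :
    (univ.filter fun M : Matrix (Fin 2) (Fin 2) (ZMod (ℓ ^ n)) =>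
      (M.det = q ∧ ∃ x, ¬ IsUnit x ∧ M.mulVec ![x, 1] = ![x, 1]) ∧ M 1 0 = e).card
      = ℓ ^ (n - (mfun ℓ ν e + 1)) := by
  classical
  have hm1n : mfun ℓ ν e + 1 ≤ n := by
    have := mfun_le (ν := ν) e; omega
  have hann2 : ∀ z : ZMod (ℓ ^ n),
      (((ℓ : ZMod (ℓ ^ n)) * e) * z = 0 ∧ ((ℓ : ZMod (ℓ ^ n)) * c) * z = 0)
      ↔ (ℓ : ZMod (ℓ ^ n)) ^ (mfun ℓ ν e + 1) * z = 0 := by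
    intro z
    have base := ann_iff hℓ hν hu hcu e ((ℓ : ZMod (ℓ ^ n)) * z)
    constructor
    · intro ⟨h1, h2⟩
      have := base.mp ⟨by linear_combination h1, by linear_combination h2⟩
      rw [pow_succ]
      linear_combination this
    · intro h
      have h' : (ℓ : ZMod (ℓ ^ n)) ^ (mfun ℓ ν e) * ((ℓ : ZMod (ℓ ^ n)) * z) = 0 := by
        rw [pow_succ] at h
        linear_combination h
      obtain ⟨he, hce⟩ := base.mpr h'
      exact ⟨by linear_combination he, by linear_combination hce⟩
  have hset : (univ.filter fun M : Matrix (Fin 2) (Fin 2) (ZMod (ℓ ^ n)) =>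
      (M.det = q ∧ ∃ x, ¬ IsUnit x ∧ M.mulVec ![x, 1] = ![x, 1]) ∧ M 1 0 = e)
      = (Finset.range (ℓ ^ (n - (mfun ℓ ν e + 1)))).image
        (fun t : ℕ => ftwo (ℓ : ZMod (ℓ ^ n)) c q e (t : ZMod (ℓ ^ n))) := by
    ext M
    rw [mem_filter, mem_image]
    constructor
    · intro hMf
      obtain ⟨x, hMx⟩ := (mem2 hc (nonunit_iff hℓ hn) M).mp hMf.2
      obtain ⟨t, ht, hred⟩ := exists_reduce hℓ hm1n x
      have hz : (ℓ : ZMod (ℓ ^ n)) ^ (mfun ℓ ν e + 1) * (x - (t : ZMod (ℓ ^ n))) = 0 := by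
        linear_combination hred
      have hfe : ftwo (ℓ : ZMod (ℓ ^ n)) c q e x = ftwo (ℓ : ZMod (ℓ ^ n)) c q e
          (t : ZMod (ℓ ^ n)) :=
        (fib2 _ c q e x _).mpr ((hann2 _).mpr hz)
      exact ⟨t, mem_range.mpr ht, (hMx.trans hfe).symm⟩
    · rintro ⟨t, ht, rfl⟩
      exact ⟨mem_univ _, (mem2 hc (nonunit_iff hℓ hn) _).mpr ⟨t, rfl⟩⟩
  rw [hset, Finset.card_image_of_injOn, Finset.card_range]
  intro t ht t' ht' hf
  rw [mem_coe, mem_range] at ht ht'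
  have h1 := (fib2 _ c q e _ _).mp hf
  have h2 := (hann2 _).mp h1
  have h3 : (ℓ : ZMod (ℓ ^ n)) ^ (n - (n - (mfun ℓ ν e + 1))) * (t : ZMod (ℓ ^ n))
      = (ℓ : ZMod (ℓ ^ n)) ^ (n - (n - (mfun ℓ ν e + 1))) * (t' : ZMod (ℓ ^ n)) := by
    have hee : n - (n - (mfun ℓ ν e + 1)) = mfun ℓ ν e + 1 := by omega
    rw [hee]
    linear_combination h2
  exact cast_inj_small hℓ (by omega : n - (mfun ℓ ν e + 1) ≤ n) ht ht' h3

end Count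

section Numeric

lemma sq_diff (ℓ : ℕ) (h1 : 1 ≤ ℓ) {n j : ℕ} (hj : j + 1 ≤ n) :
    (ℓ ^ (n - j) - ℓ ^ (n - j - 1)) * (ℓ ^ (n - j) + ℓ ^ (n - j - 1))
      = ℓ ^ (2 * n - 2 * j) - ℓ ^ (2 * n - 2 * j - 2) := by
  have e1 : ℓ ^ (n - j) = ℓ * ℓ ^ (n - j - 1) := by
    rw [← pow_succ']; congr 1; omega
  have e2 : ℓ ^ (2 * n - 2 * j) = (ℓ * ℓ ^ (n - j - 1)) ^ 2 := by
    have h : 2 * n - 2 * j = (n - j) * 2 := by omega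
    rw [h, pow_mul, e1]
  have e3 : ℓ ^ (2 * n - 2 * j - 2) = (ℓ ^ (n - j - 1)) ^ 2 := by
    have h : 2 * n - 2 * j - 2 = (n - j - 1) * 2 := by omega
    rw [h, pow_mul]
  rw [e1, e2, e3]
  have hle : ℓ ^ (n - j - 1) ≤ ℓ * ℓ ^ (n - j - 1) := Nat.le_mul_of_pos_left _ (by omega)
  have hle2 : (ℓ ^ (n - j - 1)) ^ 2 ≤ (ℓ * ℓ ^ (n - j - 1)) ^ 2 := Nat.pow_le_pow_left hle 2
  zify [hle, hle2]
  ring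

lemma telescope (ℓ : ℕ) (h1 : 1 ≤ ℓ) (n : ℕ) : ∀ ν, ν ≤ n →
    (∑ j ∈ range ν, (ℓ ^ (2 * n - 2 * j) - ℓ ^ (2 * n - 2 * j - 2)))
      = ℓ ^ (2 * n) - ℓ ^ (2 * n - 2 * ν) := by
  intro ν
  induction ν with
  | zero => simp
  | succ k ih =>
    intro hk
    rw [Finset.sum_range_succ, ih (by omega)]
    have m1 : ℓ ^ (2 * n - 2 * k) ≤ ℓ ^ (2 * n) := Nat.pow_le_pow_right h1 (by omega)
    have m2 : ℓ ^ (2 * n - 2 * k - 2) ≤ ℓ ^ (2 * n - 2 * k) := Nat.pow_le_pow_right h1 (by omega)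
    have he : 2 * n - 2 * (k + 1) = 2 * n - 2 * k - 2 := by omega
    rw [he]
    omega

lemma numeric (ℓ n ν : ℕ) (h1 : 1 ≤ ℓ) (hν : ν < n) :
    (∑ j ∈ range ν, (ℓ ^ (n - j) - ℓ ^ (n - (j + 1))) * (ℓ ^ (n - j) + ℓ ^ (n - (j + 1))))
      + ℓ ^ (n - ν) * (ℓ ^ (n - ν) + ℓ ^ (n - (ν + 1)))
      = ℓ ^ (2 * n) + ℓ ^ (2 * n - 2 * ν - 1) := by
  have hsum : (∑ j ∈ range ν, (ℓ ^ (n - j) - ℓ ^ (n - (j + 1))) * (ℓ ^ (n - j) + ℓ ^ (n - (j + 1))))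
      = ∑ j ∈ range ν, (ℓ ^ (2 * n - 2 * j) - ℓ ^ (2 * n - 2 * j - 2)) := by
    apply Finset.sum_congr rfl
    intro j hj
    rw [mem_range] at hj
    have hje : n - (j + 1) = n - j - 1 := by omega
    rw [hje, sq_diff ℓ h1 (by omega)]
  rw [hsum, telescope ℓ h1 n ν (by omega)]
  have tail1 : ℓ ^ (n - ν) * ℓ ^ (n - ν) = ℓ ^ (2 * n - 2 * ν) := by
    rw [← pow_add]; congr 1; omega
  have tail2 : ℓ ^ (n - ν) * ℓ ^ (n - (ν + 1)) = ℓ ^ (2 * n - 2 * ν - 1) := by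
    rw [← pow_add]; congr 1; omega
  rw [Nat.mul_add, tail1, tail2]
  have m1 : ℓ ^ (2 * n - 2 * ν) ≤ ℓ ^ (2 * n) := Nat.pow_le_pow_right h1 (by omega)
  omega

end Numeric

section CDecomp
variable {ℓ n : ℕ}

lemma c_decomp (hℓ : ℓ.Prime) (hn : 1 ≤ n) [NeZero (ℓ ^ n)] {q : ZMod (ℓ ^ n)} (hqn : q ≠ 1)
    {ν : ℕ} (hν : ν = padicValNat ℓ (q - 1).val) :
    ∃ u : ZMod (ℓ ^ n), IsUnit u ∧ q - 1 = (ℓ : ZMod (ℓ ^ n)) ^ ν * u := by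
  haveI : Fact ℓ.Prime := ⟨hℓ⟩
  have hne : q - 1 ≠ 0 := sub_ne_zero.mpr hqn
  have hval : (q - 1).val ≠ 0 := fun h => hne ((ZMod.val_eq_zero _).mp h)
  have hdvd : ℓ ^ ν ∣ (q - 1).val := by
    rw [hν]; exact pow_padicValNat_dvd
  set t := (q - 1).val / ℓ ^ ν with htd
  have ht : (q - 1).val = ℓ ^ ν * t := (Nat.mul_div_cancel' hdvd).symm
  have heq : q - 1 = (ℓ : ZMod (ℓ ^ n)) ^ ν * (t : ZMod (ℓ ^ n)) :=
    eq_pow_mul_of_val_eq' hℓ ht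
  refine ⟨t, ?_, heq⟩
  have hnd : ¬ ℓ ∣ t := by
    intro ⟨t', ht'⟩
    have hd2 : ℓ ^ (padicValNat ℓ (q - 1).val + 1) ∣ (q - 1).val := by
      rw [← hν, ht, ht', pow_succ]
      exact ⟨t', by ring⟩
    exact pow_succ_padicValNat_not_dvd hval hd2
  rw [ZMod.isUnit_iff_coprime]
  exact Nat.Coprime.pow_right n ((Nat.Prime.coprime_iff_not_dvd hℓ).mpr hnd).symm

end CDecomp

section Main
variable {ℓ n : ℕ}

lemma backward {R : Type} [CommRing R] (q : R) (M : Matrix (Fin 2) (Fin 2) R)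
    (h : (M.det = q ∧ ∃ y : R, M.mulVec ![1, y] = ![1, y]) ∨
      (M.det = q ∧ ∃ x : R, ¬ IsUnit x ∧ M.mulVec ![x, 1] = ![x, 1])) :
    M.det = q ∧ ∃ (w : R) (g : GL (Fin 2) R),
      (g : Matrix (Fin 2) (Fin 2) R) * (!![1, w; 0, q]) *
        ((g⁻¹ : GL (Fin 2) R) : Matrix (Fin 2) (Fin 2) R) = M := by
  rcases h with ⟨hdet, y, hy⟩ | ⟨hdet, x, hxu, hx⟩
  · refine ⟨hdet, ?_⟩
    have h00 : (!![1, 0; y, 1] : Matrix (Fin 2) (Fin 2) R) 0 0 = 1 := by simp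
    have h10 : (!![1, 0; y, 1] : Matrix (Fin 2) (Fin 2) R) 1 0 = y := by simp
    apply build q hdet !![1, 0; y, 1]
    · rw [Matrix.det_fin_two_of]
      norm_num
    · rw [h00, h10]
      exact hy
  · refine ⟨hdet, ?_⟩
    have h00 : (!![x, 1; 1, 0] : Matrix (Fin 2) (Fin 2) R) 0 0 = x := by simp
    have h10 : (!![x, 1; 1, 0] : Matrix (Fin 2) (Fin 2) R) 1 0 = 1 := by simp
    apply build q hdet !![x, 1; 1, 0]
    · rw [Matrix.det_fin_two_of]
      norm_num
    · rw [h00, h10]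
      exact hx

lemma disj (hℓ : ℓ.Prime) (hn : 1 ≤ n) [NeZero (ℓ ^ n)] {q : ZMod (ℓ ^ n)} (hqn : q ≠ 1)
    (M : Matrix (Fin 2) (Fin 2) (ZMod (ℓ ^ n))) :
    ¬ ((M.det = q ∧ ∃ y, M.mulVec ![1, y] = ![1, y]) ∧
      (M.det = q ∧ ∃ x, ¬ IsUnit x ∧ M.mulVec ![x, 1] = ![x, 1])) := by
  haveI : Nontrivial (ZMod ℓ) := @ZMod.nontrivial ℓ ⟨hℓ.one_lt⟩
  rintro ⟨⟨hdet, y, hy⟩, ⟨-, x, hxu, hx⟩⟩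
  have hπx : pi ℓ n (by omega : n ≠ 0) x = 0 := by
    rw [isUnit_iff_pi hℓ hn, not_not] at hxu
    exact hxu
  have hu : IsUnit (1 - x * y) := by
    rw [isUnit_iff_pi hℓ hn]
    rw [map_sub, _root_.map_one, _root_.map_mul, hπx, zero_mul, sub_zero]
    exact one_ne_zero
  exact hqn (derive_q_eq_one q M hdet rfl hu hy hx)

end Main

end Stmt10Aux


open Stmt10Aux

/-- The number of matrices in `GL₂(Z/ℓ^n)` of determinant `q` conjugate to some
`[[1, w],[0, q]]`, when `q ≡ 1 mod ℓ` but `q ≠ 1` in `Z/ℓ^n`. -/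
theorem stmt10 (ℓ : ℕ) (hℓ : ℓ.Prime) (n : ℕ) (hn : 1 ≤ n)
    (q : ZMod (ℓ ^ n)) (hq : IsUnit q)
    (hq1 : ZMod.castHom (dvd_pow_self ℓ (by omega : n ≠ 0)) (ZMod ℓ) q = 1)
    (hqn : q ≠ 1) (ν : ℕ) (hν : ν = padicValNat ℓ (q - 1).val)
    (hν1 : 1 ≤ ν) (hνn : ν < n) :
    Nat.card {M : Matrix (Fin 2) (Fin 2) (ZMod (ℓ ^ n)) //
        M.det = q ∧ ∃ (w : ZMod (ℓ ^ n)) (g : GL (Fin 2) (ZMod (ℓ ^ n))),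
          (g : Matrix (Fin 2) (Fin 2) (ZMod (ℓ ^ n))) * (!![1, w; 0, q]) *
              ((g⁻¹ : GL (Fin 2) (ZMod (ℓ ^ n))) : Matrix (Fin 2) (Fin 2) (ZMod (ℓ ^ n))) =
            M} =
      ℓ ^ (2 * n) + ℓ ^ (2 * n - 2 * ν - 1) := by
  classical
  haveI : NeZero (ℓ ^ n) := ⟨pow_ne_zero n hℓ.ne_zero⟩
  obtain ⟨u, hu, hcu⟩ := c_decomp hℓ hn hqn hν
  rw [Nat.card_eq_fintype_card, Fintype.card_subtype]
  have hfe : (univ.filter fun M : Matrix (Fin 2) (Fin 2) (ZMod (ℓ ^ n)) =>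
        M.det = q ∧ ∃ (w : ZMod (ℓ ^ n)) (g : GL (Fin 2) (ZMod (ℓ ^ n))),
          (g : Matrix (Fin 2) (Fin 2) (ZMod (ℓ ^ n))) * (!![1, w; 0, q]) *
              ((g⁻¹ : GL (Fin 2) (ZMod (ℓ ^ n))) : Matrix (Fin 2) (Fin 2) (ZMod (ℓ ^ n))) = M)
      = (univ.filter fun M : Matrix (Fin 2) (Fin 2) (ZMod (ℓ ^ n)) =>
          (M.det = q ∧ ∃ y, M.mulVec ![1, y] = ![1, y]))
        ∪ (univ.filter fun M : Matrix (Fin 2) (Fin 2) (ZMod (ℓ ^ n)) =>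
          (M.det = q ∧ ∃ x, ¬ IsUnit x ∧ M.mulVec ![x, 1] = ![x, 1])) := by
    rw [← Finset.filter_or]
    apply Finset.filter_congr
    intro M _
    constructor
    · exact forward q M (local_col hℓ hn)
    · exact fun h => backward q M h
  have hdisj : Disjoint
      (univ.filter fun M : Matrix (Fin 2) (Fin 2) (ZMod (ℓ ^ n)) =>
        (M.det = q ∧ ∃ y, M.mulVec ![1, y] = ![1, y]))
      (univ.filter fun M : Matrix (Fin 2) (Fin 2) (ZMod (ℓ ^ n)) =>
        (M.det = q ∧ ∃ x, ¬ IsUnit x ∧ M.mulVec ![x, 1] = ![x, 1])) := by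
    rw [Finset.disjoint_left]
    intro M h1 h2
    exact disj hℓ hn hqn M ⟨(Finset.mem_filter.mp h1).2, (Finset.mem_filter.mp h2).2⟩
  rw [hfe, Finset.card_union_of_disjoint hdisj]
  have hc1 : (univ.filter fun M : Matrix (Fin 2) (Fin 2) (ZMod (ℓ ^ n)) =>
      (M.det = q ∧ ∃ y, M.mulVec ![1, y] = ![1, y])).card
      = ∑ b : ZMod (ℓ ^ n), ℓ ^ (n - mfun ℓ ν b) := by
    rw [Finset.card_eq_sum_card_fiberwise
      (f := fun M : Matrix (Fin 2) (Fin 2) (ZMod (ℓ ^ n)) => M 0 1) (t := univ)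
      (fun M _ => Finset.mem_univ _)]
    apply Finset.sum_congr rfl
    intro b _
    rw [Finset.filter_filter]
    exact card_fiber1 hℓ hn hνn hu hcu rfl b
  have hc2 : (univ.filter fun M : Matrix (Fin 2) (Fin 2) (ZMod (ℓ ^ n)) =>
      (M.det = q ∧ ∃ x, ¬ IsUnit x ∧ M.mulVec ![x, 1] = ![x, 1])).card
      = ∑ b : ZMod (ℓ ^ n), ℓ ^ (n - (mfun ℓ ν b + 1)) := by
    rw [Finset.card_eq_sum_card_fiberwise
      (f := fun M : Matrix (Fin 2) (Fin 2) (ZMod (ℓ ^ n)) => M 1 0) (t := univ)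
      (fun M _ => Finset.mem_univ _)]
    apply Finset.sum_congr rfl
    intro b _
    rw [Finset.filter_filter]
    exact card_fiber2 hℓ hn hνn hu hcu rfl b
  rw [hc1, hc2, ← Finset.sum_add_distrib]
  have hgroup : ∑ b : ZMod (ℓ ^ n), (ℓ ^ (n - mfun ℓ ν b) + ℓ ^ (n - (mfun ℓ ν b + 1)))
      = ∑ j ∈ Finset.range (ν + 1),
          (univ.filter fun b : ZMod (ℓ ^ n) => mfun ℓ ν b = j).card
            * (ℓ ^ (n - j) + ℓ ^ (n - (j + 1))) := by
    rw [← Finset.sum_fiberwise_of_maps_to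
      (g := fun b : ZMod (ℓ ^ n) => mfun ℓ ν b) (t := Finset.range (ν + 1))
      (fun b _ => Finset.mem_range.mpr (Nat.lt_succ_of_le (mfun_le b)))
      (fun b => ℓ ^ (n - mfun ℓ ν b) + ℓ ^ (n - (mfun ℓ ν b + 1)))]
    apply Finset.sum_congr rfl
    intro j hj
    have hin : ∀ b ∈ (univ.filter fun b : ZMod (ℓ ^ n) => mfun ℓ ν b = j),
        ℓ ^ (n - mfun ℓ ν b) + ℓ ^ (n - (mfun ℓ ν b + 1))
          = ℓ ^ (n - j) + ℓ ^ (n - (j + 1)) := by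
      intro b hb
      rw [(Finset.mem_filter.mp hb).2]
    rw [Finset.sum_congr rfl hin, Finset.sum_const, smul_eq_mul]
  rw [hgroup, Finset.sum_range_succ]
  have hlast : (univ.filter fun b : ZMod (ℓ ^ n) => mfun ℓ ν b = ν).card = ℓ ^ (n - ν) := by
    rw [Finset.filter_congr (fun b _ => mfun_eq_nu_iff hℓ b)]
    exact card_filter_dvd hℓ (le_of_lt hνn)
  have hjs : ∀ j ∈ Finset.range ν,
      (univ.filter fun b : ZMod (ℓ ^ n) => mfun ℓ ν b = j).card
          * (ℓ ^ (n - j) + ℓ ^ (n - (j + 1)))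
        = (ℓ ^ (n - j) - ℓ ^ (n - (j + 1))) * (ℓ ^ (n - j) + ℓ ^ (n - (j + 1))) := by
    intro j hj
    rw [Finset.mem_range] at hj
    congr 1
    rw [Finset.filter_congr (fun b _ => mfun_eq_iff_lt hℓ hj b)]
    have hsd : (univ.filter fun b : ZMod (ℓ ^ n) => ℓ ^ j ∣ b.val ∧ ¬ ℓ ^ (j + 1) ∣ b.val)
        = (univ.filter fun b : ZMod (ℓ ^ n) => ℓ ^ j ∣ b.val)
          \ (univ.filter fun b : ZMod (ℓ ^ n) => ℓ ^ (j + 1) ∣ b.val) := by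
      ext b
      simp only [Finset.mem_filter, Finset.mem_sdiff, Finset.mem_univ, true_and]
    have hsub : (univ.filter fun b : ZMod (ℓ ^ n) => ℓ ^ (j + 1) ∣ b.val)
        ⊆ (univ.filter fun b : ZMod (ℓ ^ n) => ℓ ^ j ∣ b.val) := by
      intro b hb
      rw [Finset.mem_filter] at hb ⊢
      exact ⟨hb.1, dvd_trans (pow_dvd_pow ℓ (Nat.le_succ j)) hb.2⟩
    rw [hsd, Finset.card_sdiff_of_subset hsub, card_filter_dvd hℓ (by omega), card_filter_dvd hℓ (by omega)]
  rw [Finset.sum_congr rfl hjs, hlast]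
  exact numeric ℓ n ν hℓ.one_lt.le hνn
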